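/- Interior edge bound in the path model: Suppose the profile at time t equals G, i.e. ‖x_i(t) − x_{i+1}(t)‖ ≤ ε for every i ≥ 1, and let A_t = sup_{i ≥ 1} ‖x_i(t) − x_{i+1}(t)‖. Then for every i ≥ 2, ‖x_i(t+1) − x_{i+1}(t+1)‖ ≤ A_t. -/

import Mathlib

/-- The update neighborhood of vertex `i ≥ 1` at time `t` in the mixed HK model under
group interaction on the path graph on `ℤ⁺` with edges `(i, i+1)`:
`N_i(t) = {j ∈ ℤ⁺ : j = i, or |i − j| = 1 and ‖x_i(t) − x_j(t)‖ ≤ ε}`. -/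
noncomputable def pathNbhd {d : ℕ} (ε : ℝ) (x : ℕ → ℕ → EuclideanSpace ℝ (Fin d))
    (t i : ℕ) : Finset ℕ :=
  (Finset.range (i + 2)).filter fun j =>
    1 ≤ j ∧ (j = i ∨ ((j = i + 1 ∨ j + 1 = i) ∧ ‖x t i - x t j‖ ≤ ε))

lemma pathNbhd_interior {d : ℕ} (ε : ℝ) (x : ℕ → ℕ → EuclideanSpace ℝ (Fin d))
    (t : ℕ) (hprof : ∀ i, 1 ≤ i → ‖x t i - x t (i + 1)‖ ≤ ε)
    (k : ℕ) (hk : 1 ≤ k) :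
    pathNbhd ε x t (k + 1) = {k, k + 1, k + 2} := by
  ext j
  simp only [pathNbhd, Finset.mem_filter, Finset.mem_range, Finset.mem_insert,
    Finset.mem_singleton]
  constructor
  · rintro ⟨hj, h1, h2⟩
    rcases h2 with h | ⟨h | h, _⟩ <;> omega
  · rintro (rfl | rfl | rfl)
    · refine ⟨by omega, by omega, Or.inr ⟨Or.inr rfl, ?_⟩⟩
      rw [norm_sub_rev]; exact hprof _ hk
    · exact ⟨by omega, by omega, Or.inl rfl⟩
    · exact ⟨by omega, by omega, Or.inr ⟨Or.inl rfl, hprof (k + 1) (by omega)⟩⟩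

lemma triple_card_sum {d : ℕ} (x : ℕ → ℕ → EuclideanSpace ℝ (Fin d)) (t k : ℕ) :
    (({k, k + 1, k + 2} : Finset ℕ).card = 3) ∧
    (∑ j ∈ ({k, k + 1, k + 2} : Finset ℕ), x t j = x t k + x t (k + 1) + x t (k + 2)) := by
  have h1 : k ∉ ({k + 1, k + 2} : Finset ℕ) := by simp
  have h2 : (k + 1 : ℕ) ≠ k + 2 := by omega
  constructor
  · rw [Finset.card_insert_of_notMem h1, Finset.card_insert_of_notMem (by simp),
      Finset.card_singleton]
  · rw [Finset.sum_insert h1, Finset.sum_insert (by simp), Finset.sum_singleton, add_assoc]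

theorem interior_edge_bound (d : ℕ) (hd : 1 ≤ d) (ε : ℝ) (hε : 0 < ε)
    (x : ℕ → ℕ → EuclideanSpace ℝ (Fin d)) (α : ℕ → ℕ → ℝ)
    (hα : ∀ t i, α t i ∈ Set.Icc (0 : ℝ) 1)
    (hdyn : ∀ t i, 1 ≤ i → x (t + 1) i =
      α t i • x t i + ((1 - α t i) / ((pathNbhd ε x t i).card : ℝ)) •
        ∑ k ∈ pathNbhd ε x t i, x t k)
    (t : ℕ) (hprof : ∀ i, 1 ≤ i → ‖x t i - x t (i + 1)‖ ≤ ε) :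
    ∀ i, 2 ≤ i → ‖x (t + 1) i - x (t + 1) (i + 1)‖ ≤
      ⨆ i : ℕ, ‖x t (i + 1) - x t (i + 2)‖ := by
  intro i hi
  obtain ⟨m, rfl⟩ : ∃ m, i = m + 2 := ⟨i - 2, by omega⟩
  set a := α t (m + 2) with ha
  set b := α t (m + 3) with hb
  obtain ⟨ha0, ha1⟩ := hα t (m + 2)
  obtain ⟨hb0, hb1⟩ := hα t (m + 3)
  -- neighborhoods
  have hN1 : pathNbhd ε x t (m + 2) = {m + 1, m + 2, m + 3} :=
    pathNbhd_interior ε x t hprof (m + 1) (by omega)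
  have hN2 : pathNbhd ε x t (m + 3) = {m + 2, m + 3, m + 4} :=
    pathNbhd_interior ε x t hprof (m + 2) (by omega)
  have hd1 := hdyn t (m + 2) (by omega)
  have hd2 := hdyn t (m + 3) (by omega)
  rw [hN1, (triple_card_sum x t (m + 1)).1, (triple_card_sum x t (m + 1)).2] at hd1
  rw [hN2, (triple_card_sum x t (m + 2)).1, (triple_card_sum x t (m + 2)).2] at hd2
  set c1 := (1 - a) / 3 with hc1
  set c2 := (1 + a + b) / 3 with hc2
  set c3 := (1 - b) / 3 with hc3
  have key : x (t + 1) (m + 2) - x (t + 1) (m + 3) =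
      c1 • (x t (m + 1) - x t (m + 2)) + c2 • (x t (m + 2) - x t (m + 3)) +
      c3 • (x t (m + 3) - x t (m + 4)) := by
    rw [hd1, hd2, hc1, hc2, hc3]
    push_cast
    module
  have hbdd : BddAbove (Set.range fun j : ℕ => ‖x t (j + 1) - x t (j + 2)‖) := by
    refine ⟨ε, ?_⟩
    rintro _ ⟨j, rfl⟩
    exact hprof (j + 1) (by omega)
  have hA : ∀ j : ℕ, ‖x t (j + 1) - x t (j + 2)‖ ≤
      ⨆ i : ℕ, ‖x t (i + 1) - x t (i + 2)‖ := fun j => le_ciSup hbdd j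
  set A := ⨆ i : ℕ, ‖x t (i + 1) - x t (i + 2)‖ with hAdef
  have h1 : ‖x t (m + 1) - x t (m + 2)‖ ≤ A := hA m
  have h2 : ‖x t (m + 2) - x t (m + 3)‖ ≤ A := hA (m + 1)
  have h3 : ‖x t (m + 3) - x t (m + 4)‖ ≤ A := hA (m + 2)
  have hc1n : 0 ≤ c1 := by rw [hc1]; linarith
  have hc2n : 0 ≤ c2 := by rw [hc2]; linarith
  have hc3n : 0 ≤ c3 := by rw [hc3]; linarith
  have hsum : c1 + c2 + c3 = 1 := by rw [hc1, hc2, hc3]; ring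
  calc ‖x (t + 1) (m + 2) - x (t + 1) (m + 3)‖
      ≤ ‖c1 • (x t (m + 1) - x t (m + 2))‖ + ‖c2 • (x t (m + 2) - x t (m + 3))‖ +
        ‖c3 • (x t (m + 3) - x t (m + 4))‖ := by
        rw [key]; exact norm_add₃_le
    _ = c1 * ‖x t (m + 1) - x t (m + 2)‖ + c2 * ‖x t (m + 2) - x t (m + 3)‖ +
        c3 * ‖x t (m + 3) - x t (m + 4)‖ := by
        rw [norm_smul, norm_smul, norm_smul, Real.norm_eq_abs, Real.norm_eq_abs,
          Real.norm_eq_abs, abs_of_nonneg hc1n, abs_of_nonneg hc2n, abs_of_nonneg hc3n]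
    _ ≤ c1 * A + c2 * A + c3 * A := by gcongr
    _ = (c1 + c2 + c3) * A := by ring
    _ = A := by rw [hsum, one_mul]
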